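/- The series ∑_{n=1}^∞ ψ(n+2)/(n(n+1)) converges and equals 2 - C, where ψ is the digamma function and C = -ψ(1) is the Euler–Mascheroni constant. -/

import Mathlib

open Filter

noncomputable def digamma (x : ℝ) : ℝ := deriv (fun y : ℝ => Real.log (Real.Gamma y)) x

lemma hasDerivAt_logGamma {x : ℝ} (hx : 0 < x) :
    HasDerivAt (fun y : ℝ => Real.log (Real.Gamma y)) (digamma x) x := by
  have hd : DifferentiableAt ℝ (fun y : ℝ => Real.log (Real.Gamma y)) x := by
    refine DifferentiableAt.log ?_ (Real.Gamma_pos_of_pos hx).ne'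
    exact Real.differentiableAt_Gamma
      (fun m => (lt_of_le_of_lt (neg_nonpos.mpr (Nat.cast_nonneg m)) hx).ne')
  simpa [digamma] using hd.hasDerivAt

lemma digamma_rec {x : ℝ} (hx : 0 < x) : digamma (x + 1) = digamma x + 1 / x := by
  have h1 : HasDerivAt (fun y : ℝ => Real.log (Real.Gamma (y + 1))) (digamma (x + 1)) x := by
    have := (hasDerivAt_logGamma (by linarith : (0:ℝ) < x + 1)).comp x
      ((hasDerivAt_id x).add_const 1)
    exact this.congr_deriv (mul_one _)
  have h2 : HasDerivAt (fun y : ℝ => Real.log y + Real.log (Real.Gamma y))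
      (digamma x + 1 / x) x := by
    exact ((Real.hasDerivAt_log hx.ne').add (hasDerivAt_logGamma hx)).congr_deriv (by ring)
  have heq : (fun y : ℝ => Real.log (Real.Gamma (y + 1))) =ᶠ[nhds x]
      (fun y : ℝ => Real.log y + Real.log (Real.Gamma y)) := by
    filter_upwards [eventually_gt_nhds hx] with y hy
    rw [Real.Gamma_add_one hy.ne', Real.log_mul hy.ne' (Real.Gamma_pos_of_pos hy).ne']
  exact (h1.congr_of_eventuallyEq heq.symm).unique h2

noncomputable def H (m : ℕ) : ℝ := ∑ k ∈ Finset.Icc 1 m, (1 : ℝ) / k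

lemma H_succ (m : ℕ) : H (m + 1) = H m + 1 / ((m : ℝ) + 1) := by
  rw [H, Finset.sum_Icc_succ_top (by omega), H]; push_cast; ring

lemma digamma_nat (m : ℕ) : digamma ((m : ℝ) + 1) = digamma 1 + H m := by
  induction m with
  | zero => simp [H]
  | succ n ih =>
    have h : ((n : ℝ) + 1) + 1 = ((n + 1 : ℕ) : ℝ) + 1 := by push_cast; ring
    rw [← h, digamma_rec (by positivity), ih, H_succ]
    ring

lemma H_eq_range (m : ℕ) : H m = ∑ i ∈ Finset.range m, (1 : ℝ) / (i + 1) := by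
  induction m with
  | zero => simp [H]
  | succ n ih => rw [H_succ, Finset.sum_range_succ, ih]

lemma partial_sum_formula (N : ℕ) :
    ∑ n ∈ Finset.Icc 1 N, (digamma 1 + H (n + 1)) / ((n : ℝ) * ((n : ℝ) + 1))
      = digamma 1 * (1 - 1 / ((N : ℝ) + 1)) + (2 - H (N + 1) / ((N : ℝ) + 1) - 1 / ((N : ℝ) + 1)) := by
  induction N with
  | zero => norm_num [H]
  | succ N ih =>
    rw [Finset.sum_Icc_succ_top (by omega), ih, H_succ (N + 1)]
    have h1 : ((N : ℝ) + 1) ≠ 0 := by positivity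
    have h2 : ((N : ℝ) + 1 + 1) ≠ 0 := by positivity
    push_cast
    field_simp
    ring

lemma H_div_tendsto : Tendsto (fun N : ℕ => H (N + 1) / ((N : ℝ) + 1)) atTop (nhds 0) := by
  have hu : Tendsto (fun k : ℕ => (1 : ℝ) / (k + 1)) atTop (nhds 0) :=
    tendsto_one_div_add_atTop_nhds_zero_nat
  have hc := hu.cesaro
  have hcomp := hc.comp (tendsto_add_atTop_nat 1)
  refine hcomp.congr fun N => ?_
  simp only [Function.comp]
  rw [div_eq_inv_mul]
  congr 1
  · push_cast; ring
  · rw [H_eq_range]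

theorem digamma_series_identity :
    Tendsto (fun N : ℕ => ∑ n ∈ Finset.Icc 1 N,
        digamma ((n : ℝ) + 2) / ((n : ℝ) * ((n : ℝ) + 1)))
      atTop (nhds (2 - (-digamma 1))) := by
  have hterm : ∀ n : ℕ, digamma ((n : ℝ) + 2) = digamma 1 + H (n + 1) := by
    intro n
    have := digamma_nat (n + 1)
    push_cast at this
    rw [show ((n : ℝ) + 2) = (n : ℝ) + 1 + 1 by ring]
    exact this
  have hrw : (fun N : ℕ => ∑ n ∈ Finset.Icc 1 N,
      digamma ((n : ℝ) + 2) / ((n : ℝ) * ((n : ℝ) + 1)))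
      = fun N : ℕ => digamma 1 * (1 - 1 / ((N : ℝ) + 1)) +
          (2 - H (N + 1) / ((N : ℝ) + 1) - 1 / ((N : ℝ) + 1)) := by
    funext N
    rw [← partial_sum_formula]
    exact Finset.sum_congr rfl fun n _ => by rw [hterm n]
  rw [hrw]
  have h0 : Tendsto (fun N : ℕ => 1 / ((N : ℝ) + 1)) atTop (nhds 0) :=
    tendsto_one_div_add_atTop_nhds_zero_nat
  have h1 : Tendsto (fun N : ℕ => digamma 1 * (1 - 1 / ((N : ℝ) + 1))) atTop
      (nhds (digamma 1 * (1 - 0))) := tendsto_const_nhds.mul (tendsto_const_nhds.sub h0)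
  have h2 : Tendsto (fun N : ℕ => 2 - H (N + 1) / ((N : ℝ) + 1) - 1 / ((N : ℝ) + 1)) atTop
      (nhds ((2 : ℝ) - 0 - 0)) := (tendsto_const_nhds.sub H_div_tendsto).sub h0
  have he : (2 : ℝ) - (-digamma 1) = digamma 1 * (1 - 0) + ((2 : ℝ) - 0 - 0) := by ring
  rw [he]
  exact h1.add h2
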